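/- Let G be a locally compact Hausdorff topological group and H a closed subgroup of G that is cocompact in G, i.e. there exists a compact subset K ⊆ G such that G = HK = {hk : h ∈ H, k ∈ K}. Then G is compactly presented if and only if H is compactly presented. -/

import Mathlib

open scoped Pointwise

/-- A group `G` is *boundedly presented* by a subset `S ⊆ G` if there are an integer `n` and a
set `R` of words of length at most `n` in the letters `S ∪ S⁻¹`, each representing the identity
in `G`, such that the canonical homomorphism from the quotient of the free group on `S` by the
normal closure of `R` onto `G` is an isomorphism. -/
def BoundedlyPresentedBy (G : Type*) [Group G] (S : Set G) : Prop :=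
  ∃ (n : ℕ) (R : Set (FreeGroup S)),
    (∀ r ∈ R, ∃ w : List (S × Bool), FreeGroup.mk w = r ∧ w.length ≤ n) ∧
    Function.Surjective (FreeGroup.lift (fun s : S => (s : G))) ∧
    MonoidHom.ker (FreeGroup.lift (fun s : S => (s : G))) = Subgroup.normalClosure R

/-- A topological group is *compactly presented* if it is boundedly presented by some compact
subset. -/
def CompactlyPresented (G : Type*) [Group G] [TopologicalSpace G] : Prop :=
  ∃ S : Set G, IsCompact S ∧ BoundedlyPresentedBy G S

namespace CPAux

section Criterion
variable {α : Type*} {G : Type*} [Group G]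

theorem exists_mk_eq (z : FreeGroup α) : ∃ L : List (α × Bool), FreeGroup.mk L = z :=
  Quot.exists_rep z

theorem lift_mk_cons {β : Type*} [Group β] (f : α → β) (p : α × Bool) (L : List (α × Bool)) :
    FreeGroup.lift f (FreeGroup.mk (p :: L)) =
      (cond p.2 (f p.1) (f p.1)⁻¹) * FreeGroup.lift f (FreeGroup.mk L) := by
  simp [FreeGroup.lift_mk]

theorem lift_mk_singleton {β : Type*} [Group β] (f : α → β) (a : α) (b : Bool) :
    FreeGroup.lift f (FreeGroup.mk [(a, b)]) = cond b (f a) (f a)⁻¹ := by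
  simp [FreeGroup.lift_mk]

/-- Normal-form criterion for computing the kernel of a map from a free group. -/
theorem ker_le_of_normalForm (φ : FreeGroup α →* G) (R : Set (FreeGroup α))
    (X : G → FreeGroup α)
    (hX : ∀ (g : G) (a : α) (b : Bool),
      X g * FreeGroup.mk [(a, b)] * (X (g * φ (FreeGroup.mk [(a, b)])))⁻¹ ∈
        Subgroup.normalClosure R) :
    MonoidHom.ker φ ≤ Subgroup.normalClosure R := by
  have key : ∀ (l : List (α × Bool)) (g : G),
      X g * FreeGroup.mk l * (X (g * φ (FreeGroup.mk l)))⁻¹ ∈ Subgroup.normalClosure R := by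
    intro l
    induction l with
    | nil =>
      intro g
      have : FreeGroup.mk ([] : List (α × Bool)) = 1 := rfl
      simp only [this, mul_one, map_one]
      simpa using Subgroup.one_mem _
    | cons p l ih =>
      intro g
      have hsplit : FreeGroup.mk (p :: l) = FreeGroup.mk [p] * FreeGroup.mk l := by
        rw [FreeGroup.mul_mk]; rfl
      have h1 := hX g p.1 p.2
      have h2 := ih (g * φ (FreeGroup.mk [p]))
      have hmem := mul_mem h1 h2
      have : X g * FreeGroup.mk [p] * (X (g * φ (FreeGroup.mk [p])))⁻¹ *
          (X (g * φ (FreeGroup.mk [p])) * FreeGroup.mk l *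
            (X (g * φ (FreeGroup.mk [p]) * φ (FreeGroup.mk l)))⁻¹) =
          X g * FreeGroup.mk (p :: l) * (X (g * φ (FreeGroup.mk (p :: l))))⁻¹ := by
        rw [hsplit, map_mul, ← mul_assoc]
        group
      rw [this] at hmem
      exact hmem
  intro z hz
  obtain ⟨l, rfl⟩ := exists_mk_eq z
  have h := key l 1
  rw [MonoidHom.mem_ker] at hz
  rw [hz, mul_one] at h
  have hN : Subgroup.Normal (Subgroup.normalClosure R) := Subgroup.normalClosure_normal
  have := hN.conj_mem _ h (X 1)⁻¹
  simpa [mul_assoc] using this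


end Criterion

section Words
variable {G : Type*} [Group G]

theorem lift_mk_append {α : Type*} {β : Type*} [Group β] (f : α → β) (L₁ L₂ : List (α × Bool)) :
    FreeGroup.lift f (FreeGroup.mk (L₁ ++ L₂)) =
      FreeGroup.lift f (FreeGroup.mk L₁) * FreeGroup.lift f (FreeGroup.mk L₂) := by
  rw [← FreeGroup.mul_mk, map_mul]

/-- Elements of a power of the symmetrized set are represented by short words. -/
theorem word_of_mem_pow {S : Set G} :
    ∀ (m : ℕ) (x : G), x ∈ (S ∪ S⁻¹ ∪ {1}) ^ m →
      ∃ l : List (↥S × Bool),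
        FreeGroup.lift (fun s : S => (s : G)) (FreeGroup.mk l) = x ∧ l.length ≤ m := by
  intro m
  induction m with
  | zero =>
    intro x hx
    rw [pow_zero, Set.mem_one] at hx
    exact ⟨[], by simp [hx, FreeGroup.one_eq_mk.symm], by simp⟩
  | succ m ih =>
    intro x hx
    rw [pow_succ] at hx
    obtain ⟨y, hy, z, hz, rfl⟩ := Set.mem_mul.1 hx
    obtain ⟨l, hl, hlen⟩ := ih y hy
    rcases hz with (hz | hz) | hz
    · refine ⟨l ++ [(⟨z, hz⟩, true)], ?_, ?_⟩
      · rw [lift_mk_append, hl]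
        simp [FreeGroup.lift_mk]
      · simpa using Nat.succ_le_succ hlen
    · refine ⟨l ++ [(⟨z⁻¹, Set.mem_inv.1 hz⟩, false)], ?_, ?_⟩
      · rw [lift_mk_append, hl]
        simp [FreeGroup.lift_mk]
      · simpa using Nat.succ_le_succ hlen
    · rw [Set.mem_singleton_iff] at hz
      exact ⟨l, by simp [hl, hz], hlen.trans (Nat.le_succ m)⟩

theorem pow_subset_pow_of_one_mem {S : Set G} (h1 : (1 : G) ∈ S) {a b : ℕ} (hab : a ≤ b) :
    S ^ a ⊆ S ^ b := by
  induction b with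
  | zero => simpa [Nat.le_zero.1 hab]
  | succ b ihb =>
    rcases Nat.lt_or_ge a (b+1) with h | h
    · intro x hx
      rw [pow_succ]
      have := ihb (Nat.lt_succ_iff.1 h) hx
      simpa using Set.mul_mem_mul this h1
    · have : a = b + 1 := le_antisymm hab h
      simp [this]

/-- L1: in a locally compact group generated by a compact set,
every compact set admits a uniform bound on word length. -/
theorem exists_word_bound [TopologicalSpace G] [IsTopologicalGroup G] [T2Space G]
    [LocallyCompactSpace G] {S : Set G} (hS : IsCompact S)
    (hgen : Subgroup.closure S = ⊤) {C : Set G} (hC : IsCompact C) :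
    ∃ m : ℕ, ∀ x ∈ C, ∃ l : List (↥S × Bool),
      FreeGroup.lift (fun s : S => (s : G)) (FreeGroup.mk l) = x ∧ l.length ≤ m := by
  set Sb : Set G := S ∪ S⁻¹ ∪ {1} with hSb_def
  have h1 : (1 : G) ∈ Sb := by simp [hSb_def]
  have hSbinv : Sb⁻¹ = Sb := by
    ext x
    simp only [hSb_def, Set.mem_inv, Set.mem_union, Set.mem_singleton_iff, inv_eq_one,
      inv_inv]
    constructor
    · rintro ((h | h) | h)
      · exact Or.inl (Or.inr h)
      · exact Or.inl (Or.inl (by simpa using h))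
      · exact Or.inr h
    · rintro ((h | h) | h)
      · exact Or.inl (Or.inr (by simpa using h))
      · exact Or.inl (Or.inl h)
      · exact Or.inr h
  have hSbcomp : IsCompact Sb := (hS.union hS.inv).union isCompact_singleton
  have hpow : ∀ n : ℕ, IsCompact (Sb ^ n) := by
    intro n
    induction n with
    | zero =>
      rw [pow_zero]
      have h1' : (1 : Set G) = {1} := rfl
      rw [h1']
      exact isCompact_singleton
    | succ n ihn => rw [pow_succ]; exact ihn.mul hSbcomp
  have hinvpow : ∀ n : ℕ, (Sb ^ n)⁻¹ = Sb ^ n := fun n => by rw [← inv_pow, hSbinv]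
  have hmem : ∀ x : G, ∃ n : ℕ, x ∈ Sb ^ n := by
    intro x
    have hx : x ∈ Subgroup.closure S := by rw [hgen]; trivial
    refine Subgroup.closure_induction (fun y hy => ⟨1, by simp [hSb_def, hy]⟩)
      ⟨0, by simp⟩ (fun y z _ _ ⟨a, ha⟩ ⟨b, hb⟩ => ⟨a + b, by rw [pow_add]; exact Set.mul_mem_mul ha hb⟩)
      (fun y _ ⟨a, ha⟩ => ⟨a, (hinvpow a) ▸ Set.inv_mem_inv.2 ha⟩) hx
  have hcov : ⋃ n : ℕ, Sb ^ n = Set.univ := Set.eq_univ_of_forall fun x => Set.mem_iUnion.2 (hmem x)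
  obtain ⟨n₀, u, hu⟩ := nonempty_interior_of_iUnion_of_closed (fun n => (hpow n).isClosed) hcov
  -- cover C by translates of the interior
  have hcover : C ⊆ ⋃ x : C, (↑x * u⁻¹) • interior (Sb ^ n₀) := by
    intro y hy
    refine Set.mem_iUnion.2 ⟨⟨y, hy⟩, ?_⟩
    refine ⟨u, hu, by simp [smul_eq_mul, mul_assoc]⟩
  obtain ⟨t, ht⟩ := hC.elim_finite_subcover (fun x : C => (↑x * u⁻¹) • interior (Sb ^ n₀))
    (fun x => (isOpen_interior.smul _)) hcover
  classical
  have hchoice : ∀ x : C, ∃ n, (x : G) ∈ Sb ^ n := fun x => hmem x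
  choose p hp using hchoice
  refine ⟨(t.sup p) + (n₀ + n₀), fun y hy => ?_⟩
  have := ht hy
  rw [Set.mem_iUnion₂] at this
  obtain ⟨x, hxt, hyx⟩ := this
  obtain ⟨v, hv, rfl⟩ := hyx
  have hu' : u ∈ Sb ^ n₀ := interior_subset hu
  have huinv : u⁻¹ ∈ Sb ^ n₀ := (hinvpow n₀) ▸ Set.inv_mem_inv.2 hu'
  have hvmem : v ∈ Sb ^ n₀ := interior_subset hv
  have : (x : G) * u⁻¹ * v ∈ Sb ^ (p x + (n₀ + n₀)) := by
    rw [pow_add, pow_add, ← mul_assoc]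
    exact Set.mul_mem_mul (Set.mul_mem_mul (hp x) huinv) hvmem
  have hle : p x + (n₀ + n₀) ≤ t.sup p + (n₀ + n₀) :=
    Nat.add_le_add_right (Finset.le_sup hxt) _
  have hfin : (x : G) * u⁻¹ * v ∈ Sb ^ (t.sup p + (n₀ + n₀)) :=
    pow_subset_pow_of_one_mem h1 hle this
  exact word_of_mem_pow _ _ hfin

/-- maps carry normal closures into normal closures of images -/
theorem map_mem_normalClosure_image {α β : Type*} (f : FreeGroup α →* FreeGroup β)
    {R : Set (FreeGroup α)} {z : FreeGroup α} (hz : z ∈ Subgroup.normalClosure R) :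
    f z ∈ Subgroup.normalClosure (f '' R) := by
  have h : Subgroup.normalClosure R ≤
      Subgroup.comap f (Subgroup.normalClosure (f '' R)) := by
    have : Subgroup.Normal (Subgroup.comap f (Subgroup.normalClosure (f '' R))) :=
      Subgroup.Normal.comap Subgroup.normalClosure_normal f
    exact Subgroup.normalClosure_le_normal fun r hr =>
      Subgroup.subset_normalClosure ⟨r, hr, rfl⟩
  exact h hz


end Words

section ThetaMachinery
variable {G : Type*} [Group G] {H : Subgroup G} {S : Set G} {T : Set ↥H}

/-- the evaluation of a word in `G` -/
def evG (S : Set G) (L : List (↥S × Bool)) : G :=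
  FreeGroup.lift (fun s : S => (s : G)) (FreeGroup.mk L)

theorem evG_nil : evG S ([] : List (↥S × Bool)) = 1 := by
  rw [evG]; exact map_one _

theorem evG_cons (p : ↥S × Bool) (L : List (↥S × Bool)) :
    evG S (p :: L) = (cond p.2 (p.1 : G) (p.1 : G)⁻¹) * evG S L :=
  lift_mk_cons _ p L

theorem evG_append (L₁ L₂ : List (↥S × Bool)) :
    evG S (L₁ ++ L₂) = evG S L₁ * evG S L₂ := by
  rw [evG, evG, evG, ← FreeGroup.mul_mk, map_mul]

theorem evG_invRev (L : List (↥S × Bool)) : evG S (FreeGroup.invRev L) = (evG S L)⁻¹ := by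
  rw [evG, evG, ← FreeGroup.inv_mk, map_inv]

/-- projection of an `S`-word in `G` to a `T`-word in the subgroup `H`, relative to a
retraction `π : G → H`. -/
def theta (π : G → ↥H) (hT : ∀ (q : G) (s : ↥S), (π q)⁻¹ * π (q * ↑s) ∈ T) :
    G → List (↥S × Bool) → List (↥T × Bool)
  | _, [] => []
  | g, (s, e) :: l =>
    (⟨(π (cond e g (g * (↑s : G)⁻¹)))⁻¹ * π (cond e g (g * (↑s : G)⁻¹) * ↑s), hT _ s⟩, e) ::
      theta π hT (g * cond e (↑s : G) (↑s : G)⁻¹) l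

variable (π : G → ↥H) (hT : ∀ (q : G) (s : ↥S), (π q)⁻¹ * π (q * ↑s) ∈ T)

theorem theta_nil (g : G) : theta π hT g [] = [] := rfl

theorem theta_cons (g : G) (s : ↥S) (e : Bool) (l : List (↥S × Bool)) :
    theta π hT g ((s, e) :: l) =
      (⟨(π (cond e g (g * (↑s : G)⁻¹)))⁻¹ * π (cond e g (g * (↑s : G)⁻¹) * ↑s), hT _ s⟩, e) ::
        theta π hT (g * cond e (↑s : G) (↑s : G)⁻¹) l := rfl

theorem theta_length : ∀ (L : List (↥S × Bool)) (g : G),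
    (theta π hT g L).length = L.length := by
  intro L
  induction L with
  | nil => intro g; rfl
  | cons p l ih =>
    intro g
    obtain ⟨s, e⟩ := p
    rw [theta_cons]
    simp [ih]

theorem theta_append : ∀ (L₁ L₂ : List (↥S × Bool)) (g : G),
    theta π hT g (L₁ ++ L₂) = theta π hT g L₁ ++ theta π hT (g * evG S L₁) L₂ := by
  intro L₁
  induction L₁ with
  | nil => intro L₂ g; simp [theta_nil, evG_nil]
  | cons p l ih =>
    intro L₂ g
    obtain ⟨s, e⟩ := p
    rw [List.cons_append, theta_cons, theta_cons, ih, evG_cons, ← mul_assoc]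
    rfl

theorem cons_cancel_mk (a : ↥T) (b : Bool) (M : List (↥T × Bool)) :
    FreeGroup.mk ((a, b) :: (a, !b) :: M) = FreeGroup.mk M :=
  Quot.sound (by simpa using @FreeGroup.Red.Step.not ↥T [] M a b)

theorem theta_pair (g : G) (s : ↥S) (b : Bool) (L : List (↥S × Bool)) :
    FreeGroup.mk (theta π hT g ((s, b) :: (s, !b) :: L)) =
      FreeGroup.mk (theta π hT g L) := by
  cases b
  · -- b = false
    rw [theta_cons, theta_cons]
    simp only [Bool.cond_false, Bool.cond_true, Bool.not_false]
    have h1 : g * (↑s : G)⁻¹ * ↑s = g := by group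
    rw [show theta π hT (g * (↑s : G)⁻¹ * ↑s) L = theta π hT g L from by rw [h1]]
    exact cons_cancel_mk _ false _
  · -- b = true
    rw [theta_cons, theta_cons]
    simp only [Bool.cond_true, Bool.cond_false, Bool.not_true]
    have h1 : g * (↑s : G) * (↑s : G)⁻¹ = g := by group
    have h2 : (⟨(π (g * (↑s : G) * (↑s : G)⁻¹))⁻¹ * π (g * (↑s : G) * (↑s : G)⁻¹ * ↑s),
        hT _ s⟩ : ↥T) = ⟨(π g)⁻¹ * π (g * (↑s : G)), hT g s⟩ := Subtype.ext (by rw [h1])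
    rw [h2, show theta π hT (g * (↑s : G) * (↑s : G)⁻¹) L = theta π hT g L from by rw [h1]]
    exact cons_cancel_mk _ true _

theorem theta_step {L₁ L₂ : List (↥S × Bool)} (g : G) (h : FreeGroup.Red.Step L₁ L₂) :
    FreeGroup.mk (theta π hT g L₁) = FreeGroup.mk (theta π hT g L₂) := by
  cases h with
  | @not L₁ L₂ x b =>
    rw [theta_append, theta_append]
    rw [← FreeGroup.mul_mk, ← FreeGroup.mul_mk]
    congr 1
    exact theta_pair π hT _ x b L₂

/-- The projection `FreeGroup S → FreeGroup T`, well defined on the quotient. -/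
def Theta (g : G) : FreeGroup ↥S → FreeGroup ↥T :=
  Quot.lift (fun L => FreeGroup.mk (theta π hT g L)) fun _ _ h => theta_step π hT g h

theorem Theta_mk (g : G) (L : List (↥S × Bool)) :
    Theta π hT g (FreeGroup.mk L) = FreeGroup.mk (theta π hT g L) := rfl

theorem Theta_mul (g : G) (u v : FreeGroup ↥S) :
    Theta π hT g (u * v) =
      Theta π hT g u * Theta π hT (g * FreeGroup.lift (fun s : S => (s : G)) u) v := by
  obtain ⟨L₁, rfl⟩ := Quot.exists_rep u
  obtain ⟨L₂, rfl⟩ := Quot.exists_rep v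
  rw [FreeGroup.quot_mk_eq_mk, FreeGroup.quot_mk_eq_mk, FreeGroup.mul_mk,
    Theta_mk, Theta_mk, Theta_mk, theta_append, ← FreeGroup.mul_mk]
  rfl

theorem theta_invRev : ∀ (L : List (↥S × Bool)) (g : G),
    theta π hT g (FreeGroup.invRev L) =
      FreeGroup.invRev (theta π hT (g * (evG S L)⁻¹) L) := by
  intro L
  induction L with
  | nil => intro g; simp [FreeGroup.invRev, theta_nil]
  | cons p l ih =>
    intro g
    obtain ⟨s, e⟩ := p
    have hinvcons : FreeGroup.invRev ((s, e) :: l) = FreeGroup.invRev l ++ [(s, !e)] := by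
      simp [FreeGroup.invRev]
    have hinvcons2 : ∀ (a : ↥T × Bool) (M : List (↥T × Bool)),
        FreeGroup.invRev (a :: M) = FreeGroup.invRev M ++ [(a.1, !a.2)] := by
      intro a M; simp [FreeGroup.invRev]
    rw [hinvcons, theta_append, ih, evG_invRev,
      theta_cons π hT (g * (evG S ((s, e) :: l))⁻¹) s e l, hinvcons2]
    have hbase : g * (evG S ((s, e) :: l))⁻¹ * cond e (↑s : G) ((↑s : G))⁻¹ =
        g * (evG S l)⁻¹ := by
      rw [evG_cons]; cases e <;> · simp only [Bool.cond_false, Bool.cond_true]; group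
    congr 1
    · rw [hbase]
    · -- single letter equality
      cases e
      · have hq : g * (evG S ((s, false) :: l))⁻¹ * (↑s : G)⁻¹ = g * (evG S l)⁻¹ := by
          rw [evG_cons]; simp only [Bool.cond_false]; group
        show theta π hT (g * (evG S l)⁻¹) [(s, true)] =
          [(⟨(π (g * (evG S ((s, false) :: l))⁻¹ * (↑s : G)⁻¹))⁻¹ *
              π (g * (evG S ((s, false) :: l))⁻¹ * (↑s : G)⁻¹ * ↑s), hT _ s⟩, true)]
        rw [theta_cons, theta_nil]
        simp only [Bool.cond_true]
        exact congrArg (fun a : ↥T => [(a, true)]) (Subtype.ext (by rw [hq]))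
      · have hq : g * (evG S ((s, true) :: l))⁻¹ = g * (evG S l)⁻¹ * (↑s : G)⁻¹ := by
          rw [evG_cons]; simp only [Bool.cond_true]; group
        show theta π hT (g * (evG S l)⁻¹) [(s, false)] =
          [(⟨(π (g * (evG S ((s, true) :: l))⁻¹))⁻¹ *
              π (g * (evG S ((s, true) :: l))⁻¹ * ↑s), hT _ s⟩, false)]
        rw [theta_cons, theta_nil]
        simp only [Bool.cond_false]
        exact congrArg (fun a : ↥T => [(a, false)]) (Subtype.ext (by rw [hq]))

theorem Theta_inv (g : G) (u : FreeGroup ↥S) :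
    Theta π hT g u⁻¹ =
      (Theta π hT (g * (FreeGroup.lift (fun s : S => (s : G)) u)⁻¹) u)⁻¹ := by
  obtain ⟨L, rfl⟩ := Quot.exists_rep u
  rw [FreeGroup.quot_mk_eq_mk, FreeGroup.inv_mk, Theta_mk, Theta_mk, theta_invRev,
    ← FreeGroup.inv_mk]
  rfl

theorem theta_eval : ∀ (L : List (↥S × Bool)) (g : G),
    FreeGroup.lift (fun t : T => (t : ↥H)) (FreeGroup.mk (theta π hT g L)) =
      (π g)⁻¹ * π (g * evG S L) := by
  intro L
  induction L with
  | nil =>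
    intro g
    rw [theta_nil, show FreeGroup.mk ([] : List (↥T × Bool)) = 1 from rfl, map_one,
      evG_nil, mul_one, inv_mul_cancel]
  | cons p l ih =>
    intro g
    obtain ⟨s, e⟩ := p
    rw [theta_cons, lift_mk_cons, ih, evG_cons]
    cases e
    · simp only [Bool.cond_false]
      have h1 : g * (↑s : G)⁻¹ * ↑s = g := by group
      rw [h1, ← mul_assoc g]
      group
    · simp only [Bool.cond_true]
      rw [← mul_assoc g]
      group

/-- Lemma A: a "retract-cocompact" subgroup of a boundedly presented group is
boundedly presented. -/
theorem boundedlyPresentedBy_subgroup (H : Subgroup G)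
    (π : G → ↥H) (hπH : ∀ h : ↥H, π ((h : G)) = h)
    {S : Set G} (hbp : BoundedlyPresentedBy G S)
    (T : Set ↥H) (hT : ∀ (q : G) (s : ↥S), (π q)⁻¹ * π (q * ↑s) ∈ T)
    (m : ℕ) (hm : ∀ t : ↥T, ∃ w : List (↥S × Bool),
      FreeGroup.lift (fun s : S => (s : G)) (FreeGroup.mk w) = ((t : ↥H) : G) ∧
        w.length ≤ m) :
    BoundedlyPresentedBy ↥H T := by
  classical
  obtain ⟨n, RG, hRGbound, hsurjG, hkerG⟩ := hbp
  set φG : FreeGroup ↥S →* G := FreeGroup.lift (fun s : S => (s : G)) with hφG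
  set φT : FreeGroup ↥T →* ↥H := FreeGroup.lift (fun t : T => (t : ↥H)) with hφT
  set N' := max n (m + 1) with hN'
  set RT : Set (FreeGroup ↥T) :=
    {x | (∃ w : List (↥T × Bool), FreeGroup.mk w = x ∧ w.length ≤ N') ∧ φT x = 1} with hRT
  set N := Subgroup.normalClosure RT with hN
  have hNnormal : N.Normal := Subgroup.normalClosure_normal
  -- P3 : Theta carries the normal closure of R_G into N
  have hP3 : ∀ z : FreeGroup ↥S, z ∈ Subgroup.normalClosure RG →
      z ∈ MonoidHom.ker φG ∧ ∀ g : G, Theta π hT g z ∈ N := by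
    intro z hz
    refine Subgroup.closure_induction ?_ ?_ ?_ ?_ hz
    · rintro x hx
      obtain ⟨r, hrR, hconj⟩ := Group.mem_conjugatesOfSet_iff.1 hx
      obtain ⟨c, rfl⟩ := isConj_iff.1 hconj
      have hr1 : φG r = 1 := by
        rw [← MonoidHom.mem_ker, hkerG]
        exact Subgroup.subset_normalClosure hrR
      constructor
      · rw [MonoidHom.mem_ker, map_mul, map_mul, map_inv, hr1]
        group
      · intro g
        have harg1 : g * φG (c * r) = g * φG c := by rw [map_mul, hr1, mul_one]
        have harg2 : g * φG (c * r) * (φG c)⁻¹ = g := by rw [harg1]; group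
        have hexp : Theta π hT g (c * r * c⁻¹) =
            Theta π hT g c * Theta π hT (g * φG c) r * (Theta π hT g c)⁻¹ := by
          rw [Theta_mul, Theta_mul, Theta_inv, ← hφG, harg2]
        rw [hexp]
        have hmid : Theta π hT (g * φG c) r ∈ RT := by
          obtain ⟨wr, hwr, hwrlen⟩ := hRGbound r hrR
          rw [← hwr, Theta_mk]
          constructor
          · exact ⟨_, rfl, by rw [theta_length]; exact hwrlen.trans (le_max_left _ _)⟩
          · rw [hφT, theta_eval]
            have : evG S wr = 1 := by
              show φG (FreeGroup.mk wr) = 1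
              rw [hwr, hr1]
            rw [this, mul_one, inv_mul_cancel]
        exact hNnormal.conj_mem _ (Subgroup.subset_normalClosure hmid) (Theta π hT g c)
    · exact ⟨one_mem _, fun g => by
        rw [show (1 : FreeGroup ↥S) = FreeGroup.mk [] from rfl, Theta_mk, theta_nil]
        exact one_mem N⟩
    · rintro x y hx hy ⟨hxk, hxN⟩ ⟨hyk, hyN⟩
      refine ⟨mul_mem hxk hyk, fun g => ?_⟩
      rw [Theta_mul, ← hφG, show φG x = 1 from hxk, mul_one]
      exact mul_mem (hxN g) (hyN g)
    · rintro x hx ⟨hxk, hxN⟩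
      refine ⟨inv_mem hxk, fun g => ?_⟩
      rw [Theta_inv, ← hφG, show φG x = 1 from hxk, inv_one, mul_one]
      exact inv_mem (hxN g)
  refine ⟨N', RT, fun r hr => hr.1, ?_, ?_⟩
  · -- surjectivity : every h ∈ H is hit
    intro h
    obtain ⟨x, hx⟩ := hsurjG ((h : ↥H) : G)
    obtain ⟨L, rfl⟩ := Quot.exists_rep x
    rw [FreeGroup.quot_mk_eq_mk] at hx
    refine ⟨FreeGroup.mk (theta π hT 1 L), ?_⟩
    rw [← hφT, theta_eval, one_mul]
    have hevL : evG S L = ((h : ↥H) : G) := hx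
    rw [hevL, hπH h, show (1 : G) = ((1 : ↥H) : G) from rfl, hπH 1]
    group
  · apply le_antisymm
    · -- via the normal form criterion
      set xx : ↥H → FreeGroup ↥S := fun h => Classical.choose (hsurjG ((h : ↥H) : G)) with hxx
      have hxx_spec : ∀ h : ↥H, φG (xx h) = ((h : ↥H) : G) := fun h =>
        Classical.choose_spec (hsurjG ((h : ↥H) : G))
      set X : ↥H → FreeGroup ↥T := fun h => Theta π hT 1 (xx h) with hX
      apply ker_le_of_normalForm φT RT X
      intro h t b
      set te : ↥H := φT (FreeGroup.mk [(t, b)]) with hte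
      have hte' : te = cond b ((t : ↥H)) ((t : ↥H))⁻¹ := by rw [hte, hφT, lift_mk_singleton]
      obtain ⟨w, hw, hwlen⟩ := hm t
      set u : FreeGroup ↥S := FreeGroup.mk w with hu_def
      have hu : φG u = ((t : ↥H) : G) := hw
      set e : FreeGroup ↥S := cond b u u⁻¹ with he_def
      have he : φG e = ((te : ↥H) : G) := by
        cases b
        · rw [he_def, hte']
          simp only [Bool.cond_false]
          rw [map_inv, hu]
          push_cast
          rfl
        · rw [he_def, hte']
          simp only [Bool.cond_true]
          exact hu
      set z : FreeGroup ↥S := xx h * e * (xx (h * te))⁻¹ with hz_def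
      have hzker : φG z = 1 := by
        rw [hz_def, map_mul, map_inv, map_mul, hxx_spec, hxx_spec, he]
        push_cast
        group
      obtain ⟨-, hzN⟩ := hP3 z (by rw [← hkerG]; exact hzker)
      -- two evaluations of `Theta 1 (xx h * e)`
      have hA : Theta π hT 1 (xx h * e) = X h * Theta π hT ((h : ↥H) : G) e := by
        rw [Theta_mul, ← hφG, hxx_spec, one_mul]
      have hB : xx h * e = z * xx (h * te) := by rw [hz_def]; group
      have hA2 : Theta π hT 1 (xx h * e) = Theta π hT 1 z * X (h * te) := by
        rw [hB, Theta_mul, ← hφG, hzker, mul_one]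
      -- Claim : Theta ↑h e = mk [(t,b)] * n₂ with n₂ ∈ N
      have hclaim : ∃ n₂ ∈ N, Theta π hT ((h : ↥H) : G) e = FreeGroup.mk [(t, b)] * n₂ := by
        cases b
        · -- b = false, e = u⁻¹
          have h4 : Theta π hT ((h : ↥H) : G) u⁻¹ =
              (Theta π hT (((h : ↥H) : G) * (((t : ↥H) : G))⁻¹) u)⁻¹ := by
            rw [Theta_inv, ← hφG, hu]
          set r₂ : FreeGroup ↥T :=
            FreeGroup.mk ((t, false) :: theta π hT (((h : ↥H) : G) * (((t : ↥H) : G))⁻¹) w)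
            with hr₂
          have hr₂RT : r₂ ∈ RT := by
            constructor
            · refine ⟨_, rfl, ?_⟩
              rw [List.length_cons, theta_length]
              have : w.length + 1 ≤ m + 1 := by omega
              exact this.trans (le_max_right n (m + 1))
            · have hevalw : φT (FreeGroup.mk (theta π hT
                  (((h : ↥H) : G) * (((t : ↥H) : G))⁻¹) w)) =
                  (π (((h : ↥H) : G) * (((t : ↥H) : G))⁻¹))⁻¹ *
                    π (((h : ↥H) : G) * (((t : ↥H) : G))⁻¹ * evG S w) :=
                theta_eval π hT w _
              rw [hr₂, hφT, lift_mk_cons]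
              simp only [Bool.cond_false]
              rw [← hφT, hevalw]
              have hcoe1 : ((h : ↥H) : G) * (((t : ↥H) : G))⁻¹ = (((h * (t:↥H)⁻¹) : ↥H) : G) := by
                push_cast; rfl
              have hev : evG S w = ((t : ↥H) : G) := hw
              rw [hev]
              have hcoe2 : ((h : ↥H) : G) * (((t : ↥H) : G))⁻¹ * ((t : ↥H) : G) =
                  ((h : ↥H) : G) := by group
              rw [hcoe2, hcoe1, hπH, hπH]
              push_cast
              group
          have h5 : Theta π hT (((h : ↥H) : G) * (((t : ↥H) : G))⁻¹) u =
              FreeGroup.mk [(t, true)] * r₂ := by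
            rw [hu_def, Theta_mk, hr₂, FreeGroup.mul_mk]
            exact (cons_cancel_mk t true _).symm
          refine ⟨(FreeGroup.mk [(t, false)])⁻¹ * r₂⁻¹ * FreeGroup.mk [(t, false)], ?_, ?_⟩
          · have : r₂⁻¹ ∈ N := inv_mem (Subgroup.subset_normalClosure hr₂RT)
            have := hNnormal.conj_mem _ this (FreeGroup.mk [(t, false)])⁻¹
            simpa [mul_assoc] using this
          · show Theta π hT ((h : ↥H) : G) e = _
            rw [he_def]
            simp only [Bool.cond_false]
            rw [h4, h5]
            have hletterinv : (FreeGroup.mk [((t : ↥T), true)])⁻¹ =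
                FreeGroup.mk [((t : ↥T), false)] := by
              rw [FreeGroup.inv_mk]; rfl
            rw [mul_inv_rev, hletterinv]
            group
        · -- b = true, e = u
          set r₁ : FreeGroup ↥T :=
            FreeGroup.mk ((t, false) :: theta π hT ((h : ↥H) : G) w) with hr₁
          have hr₁RT : r₁ ∈ RT := by
            constructor
            · refine ⟨_, rfl, ?_⟩
              rw [List.length_cons, theta_length]
              have : w.length + 1 ≤ m + 1 := by omega
              exact this.trans (le_max_right n (m + 1))
            · have hevalw : φT (FreeGroup.mk (theta π hT ((h : ↥H) : G) w)) =
                  (π ((h : ↥H) : G))⁻¹ * π (((h : ↥H) : G) * evG S w) :=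
                theta_eval π hT w _
              rw [hr₁, hφT, lift_mk_cons]
              simp only [Bool.cond_false]
              rw [← hφT, hevalw]
              have hev : evG S w = ((t : ↥H) : G) := hw
              rw [hev]
              have hcoe1 : ((h : ↥H) : G) * ((t : ↥H) : G) = (((h * (t : ↥H)) : ↥H) : G) := by
                push_cast; rfl
              rw [hcoe1, hπH, hπH]
              group
          have h5 : Theta π hT ((h : ↥H) : G) u = FreeGroup.mk [(t, true)] * r₁ := by
            rw [hu_def, Theta_mk, hr₁, FreeGroup.mul_mk]
            exact (cons_cancel_mk t true _).symm
          refine ⟨r₁, Subgroup.subset_normalClosure hr₁RT, ?_⟩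
          show Theta π hT ((h : ↥H) : G) e = _
          rw [he_def]
          simp only [Bool.cond_true]
          exact h5
      obtain ⟨n₂, hn₂, hTe⟩ := hclaim
      have E : X h * (FreeGroup.mk [(t, b)] * n₂) = Theta π hT 1 z * X (h * te) := by
        rw [← hTe, ← hA, hA2]
      have E2 : Theta π hT 1 z =
          X h * (FreeGroup.mk [(t, b)] * n₂) * (X (h * te))⁻¹ :=
        eq_mul_inv_of_mul_eq E.symm
      have m1 : X h * (FreeGroup.mk [(t, b)] * n₂) * (X (h * te))⁻¹ ∈ N := E2 ▸ hzN 1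
      have m2 : X (h * te) * n₂⁻¹ * (X (h * te))⁻¹ ∈ N :=
        hNnormal.conj_mem _ (inv_mem hn₂) _
      have hfin : X h * FreeGroup.mk [(t, b)] * (X (h * te))⁻¹ =
          (X h * (FreeGroup.mk [(t, b)] * n₂) * (X (h * te))⁻¹) *
            (X (h * te) * n₂⁻¹ * (X (h * te))⁻¹) := by group
      rw [hfin]
      exact mul_mem m1 m2
    · -- normalClosure ≤ ker
      have : Subgroup.Normal (MonoidHom.ker φT) := MonoidHom.normal_ker φT
      exact Subgroup.normalClosure_le_normal fun r hr => hr.2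

end ThetaMachinery

section LemB
variable {G : Type*} [Group G]

/-- Lemma B: a group is boundedly presented over generators coming from a boundedly
presented subgroup together with a "transversal" set. -/
theorem boundedlyPresentedBy_of_subgroup (H : Subgroup G)
    (π : G → H) (ρ : G → G) (hπρ : ∀ g, (π g : G) * ρ g = g)
    {T : Set H} (hbp : BoundedlyPresentedBy H T)
    (S : Set G) (hST : ∀ t : T, ((t : H) : G) ∈ S) (hρS : ∀ g, ρ g ∈ S)
    (m : ℕ)
    (hm : ∀ (q : G) (s : S) (b : Bool),
      ∃ w : List (T × Bool),
        FreeGroup.lift (fun t : T => (t : H)) (FreeGroup.mk w) =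
          (π q)⁻¹ * π (q * cond b (s : G) (s : G)⁻¹) ∧ w.length ≤ m) :
    BoundedlyPresentedBy G S := by
  obtain ⟨nH, RH, hRHbound, hsurjH, hkerH⟩ := hbp
  set φH : FreeGroup T →* H := FreeGroup.lift (fun t : T => (t : H)) with hφH
  set φG : FreeGroup S →* G := FreeGroup.lift (fun s : S => (s : G)) with hφG
  set j : T → S := fun t => ⟨((t : H) : G), hST t⟩ with hj
  set ι : FreeGroup T →* FreeGroup S := FreeGroup.map j with hι
  have hcomp : ∀ x : FreeGroup T, φG (ι x) = ((φH x : H) : G) := by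
    intro x
    obtain ⟨L, rfl⟩ := Quot.exists_rep x
    rw [FreeGroup.quot_mk_eq_mk]
    induction L with
    | nil =>
      have h1 : FreeGroup.mk ([] : List (T × Bool)) = 1 := rfl
      simp [h1]
    | cons p L ihL =>
      obtain ⟨t, b⟩ := p
      have hsplit : FreeGroup.mk ((t, b) :: L) = FreeGroup.mk [(t, b)] * FreeGroup.mk L := by
        rw [FreeGroup.mul_mk]; rfl
      have h1 : ι (FreeGroup.mk [(t, b)]) = FreeGroup.mk [(j t, b)] := by
        rw [hι, FreeGroup.map.mk]; rfl
      rw [hsplit, map_mul, map_mul, map_mul, ihL, h1]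
      rw [hφG, hφH, lift_mk_singleton, lift_mk_singleton]
      cases b <;> push_cast <;> simp [hj]
  set N' := max nH (m + 3) with hN'
  set RG : Set (FreeGroup S) :=
    {x | (∃ w : List (S × Bool), FreeGroup.mk w = x ∧ w.length ≤ N') ∧ φG x = 1} with hRG
  refine ⟨N', RG, fun r hr => hr.1, ?_, ?_⟩
  · -- surjectivity
    intro g
    obtain ⟨y, hy⟩ := hsurjH (π g)
    refine ⟨ι y * FreeGroup.mk [(⟨ρ g, hρS g⟩, true)], ?_⟩
    rw [map_mul, hcomp, hy, lift_mk_singleton]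
    simpa using hπρ g
  · -- kernel computation
    apply le_antisymm
    · -- ker ≤ normalClosure, via the normal form criterion
      set yy : H → FreeGroup T := fun h => Classical.choose (hsurjH h) with hyy
      have hyy_spec : ∀ h : H, φH (yy h) = h := fun h => Classical.choose_spec (hsurjH h)
      set X : G → FreeGroup S := fun g => ι (yy (π g)) * FreeGroup.mk [(⟨ρ g, hρS g⟩, true)]
        with hX
      apply ker_le_of_normalForm φG RG X
      intro g s b
      set sv : G := φG (FreeGroup.mk [(s, b)]) with hsv
      have hsv' : sv = cond b (s : G) (s : G)⁻¹ := by
        rw [hsv, hφG, lift_mk_singleton]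
      set g' : G := g * sv with hg'
      set δ : H := (π g)⁻¹ * π g' with hδ
      have hπcoe : ∀ q : G, ((π q : H) : G) = q * (ρ q)⁻¹ := fun q =>
        eq_mul_inv_of_mul_eq (hπρ q)
      have hδcoe : (δ : G) = ρ g * sv * (ρ g')⁻¹ := by
        rw [hδ]
        push_cast
        rw [hπcoe, hπcoe, hg']
        group
      obtain ⟨wδ, hwδ, hwδlen⟩ := hm g s b
      have hwδ' : φH (FreeGroup.mk wδ) = δ := by rw [hφH] at hwδ ⊢; rw [hwδ, hδ, hg', hsv']
      -- the short relator r₀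
      set r₀ : FreeGroup S := FreeGroup.mk [(⟨ρ g, hρS g⟩, true), (s, b), (⟨ρ g', hρS g'⟩, false)]
        * (ι (FreeGroup.mk wδ))⁻¹ with hr₀
      have hr₀mem : r₀ ∈ RG := by
        constructor
        · refine ⟨[(⟨ρ g, hρS g⟩, true), (s, b), (⟨ρ g', hρS g'⟩, false)] ++
            FreeGroup.invRev (wδ.map fun p => (j p.1, p.2)), ?_, ?_⟩
          · rw [← FreeGroup.mul_mk, ← FreeGroup.inv_mk, hr₀, hι, FreeGroup.map.mk]
          · rw [List.length_append, FreeGroup.invRev_length, List.length_map]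
            have : 3 + wδ.length ≤ m + 3 := by omega
            exact le_trans (by simpa using this) (le_max_right _ _)
        · rw [hr₀, map_mul, map_inv, hcomp, hwδ', hδcoe]
          have : φG (FreeGroup.mk [(⟨ρ g, hρS g⟩, true), (s, b), (⟨ρ g', hρS g'⟩, false)]) =
              ρ g * sv * (ρ g')⁻¹ := by
            rw [hφG, FreeGroup.lift_mk]
            simp only [List.map_cons, List.map_nil, List.prod_cons, List.prod_nil, mul_one]
            rw [hsv']
            cases b <;> simp [mul_assoc]
          rw [this]
          group
      -- the H-relation
      have hπg' : π g' = π g * δ := by rw [hδ]; group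
      set z : FreeGroup T := yy (π g) * FreeGroup.mk wδ * (yy (π g'))⁻¹ with hz
      have hzker : z ∈ MonoidHom.ker φH := by
        rw [MonoidHom.mem_ker, hz, map_mul, map_mul, map_inv, hyy_spec, hyy_spec, hwδ', hπg']
        group
      have hzclos : ι z ∈ Subgroup.normalClosure RG := by
        rw [hkerH] at hzker
        have himg := map_mem_normalClosure_image ι hzker
        have hsub : ι '' RH ⊆ Subgroup.normalClosure RG := by
          rintro _ ⟨r, hr, rfl⟩
          apply Subgroup.subset_normalClosure
          constructor
          · obtain ⟨w, hw, hwlen⟩ := hRHbound r hr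
            refine ⟨w.map fun p => (j p.1, p.2), ?_, ?_⟩
            · rw [← hw, hι, FreeGroup.map.mk]
            · rw [List.length_map]; exact hwlen.trans (le_max_left _ _)
          · rw [hcomp]
            have : φH r = 1 := by
              rw [← MonoidHom.mem_ker, hkerH]
              exact Subgroup.subset_normalClosure hr
            rw [this, OneMemClass.coe_one]
        have := Subgroup.normalClosure_le_normal hsub
        exact this himg
      -- final algebra
      have hXg' : X g' = ι (yy (π g')) * FreeGroup.mk [(⟨ρ g', hρS g'⟩, true)] := rfl
      have hkey : X g * FreeGroup.mk [(s, b)] * (X g')⁻¹ =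
          (ι (yy (π g)) * r₀ * (ι (yy (π g)))⁻¹) * ι z := by
        rw [hX]
        simp only [hXg', hr₀, hz, map_mul, map_inv]
        have hinvmk : (FreeGroup.mk [((⟨ρ g', hρS g'⟩ : S), true)])⁻¹ =
            FreeGroup.mk [((⟨ρ g', hρS g'⟩ : S), false)] := by
          rw [FreeGroup.inv_mk]; rfl
        have htriple : FreeGroup.mk [((⟨ρ g, hρS g⟩ : S), true)] * FreeGroup.mk [(s, b)] *
            FreeGroup.mk [((⟨ρ g', hρS g'⟩ : S), false)] =
            FreeGroup.mk [(⟨ρ g, hρS g⟩, true), (s, b), (⟨ρ g', hρS g'⟩, false)] := by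
          rw [FreeGroup.mul_mk, FreeGroup.mul_mk]
          rfl
        rw [mul_inv_rev, hinvmk, ← htriple]
        group
      rw [hkey]
      have hN : Subgroup.Normal (Subgroup.normalClosure RG) := Subgroup.normalClosure_normal
      exact mul_mem (hN.conj_mem _ (Subgroup.subset_normalClosure hr₀mem) _) hzclos
    · -- normalClosure ≤ ker
      have : Subgroup.Normal (MonoidHom.ker φG) := MonoidHom.normal_ker φG
      exact Subgroup.normalClosure_le_normal fun r hr => hr.2


end LemB

end CPAux

/-- a locally compact Hausdorff topological group is compactly presented if and
only if a given closed cocompact subgroup is compactly presented. -/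
theorem compactlyPresented_iff_cocompact_subgroup {G : Type*} [Group G] [TopologicalSpace G]
    [IsTopologicalGroup G] [T2Space G] [LocallyCompactSpace G]
    (H : Subgroup G) (hclosed : IsClosed (H : Set G))
    (K : Set G) (hK : IsCompact K) (hHK : (H : Set G) * K = Set.univ) :
    CompactlyPresented G ↔ CompactlyPresented H := by
  classical
  set K₁ : Set G := K ∪ K⁻¹ ∪ {1} with hK₁def
  have hK₁comp : IsCompact K₁ := (hK.union hK.inv).union isCompact_singleton
  have h1K : (1 : G) ∈ K₁ := by simp [hK₁def]
  have hsec : ∀ g : G, ∃ k : G, k ∈ K₁ ∧ g * k⁻¹ ∈ H ∧ (g ∈ H → k = 1) := by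
    intro g
    by_cases hg : g ∈ H
    · exact ⟨1, h1K, by simpa using hg, fun _ => rfl⟩
    · have hg' : g ∈ (H : Set G) * K := by rw [hHK]; trivial
      obtain ⟨h, hh, k, hk, hhk⟩ := Set.mem_mul.1 hg'
      refine ⟨k, Or.inl (Or.inl hk), ?_, fun hgH => absurd hgH hg⟩
      have : g * k⁻¹ = h := by rw [← hhk]; group
      rw [this]; exact hh
  choose ρ hρK₁ hρH hρ1 using hsec
  set π : G → ↥H := fun g => ⟨g * (ρ g)⁻¹, hρH g⟩ with hπdef
  have hπρ : ∀ g, ((π g : ↥H) : G) * ρ g = g := fun g => by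
    show g * (ρ g)⁻¹ * ρ g = g
    group
  have hπH : ∀ h : ↥H, π ((h : ↥H) : G) = h := by
    intro h
    apply Subtype.ext
    show ((h : ↥H) : G) * (ρ ((h : ↥H) : G))⁻¹ = ((h : ↥H) : G)
    rw [hρ1 _ h.2]
    simp
  haveI hHlc : LocallyCompactSpace ↥H := hclosed.locallyCompactSpace
  constructor
  · rintro ⟨S, hScomp, hbpG⟩
    have hbpG' := hbpG
    obtain ⟨n0, R0, -, hsurj0, -⟩ := hbpG'
    have hgen : Subgroup.closure S = (⊤ : Subgroup G) := by
      have hr : (FreeGroup.lift (fun s : S => (s : G))).range = ⊤ :=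
        MonoidHom.range_eq_top.2 hsurj0
      rw [FreeGroup.range_lift_eq_closure, Subtype.range_coe] at hr
      exact hr
    set Q : Set G := K₁ * S * K₁⁻¹ with hQdef
    have hQcomp : IsCompact Q := (hK₁comp.mul hScomp).mul hK₁comp.inv
    set T : Set ↥H := {h : ↥H | (h : G) ∈ Q} with hTdef
    have hTcomp : IsCompact T := by
      rw [Subtype.isCompact_iff]
      have himg : (Subtype.val '' T : Set G) = Q ∩ (H : Set G) := by
        ext x
        constructor
        · rintro ⟨⟨y, hy⟩, hmem, rfl⟩
          exact ⟨hmem, hy⟩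
        · rintro ⟨hxQ, hxH⟩
          exact ⟨⟨x, hxH⟩, hxQ, rfl⟩
      rw [himg]
      exact hQcomp.inter_right hclosed
    have hT : ∀ (q : G) (s : ↥S), (π q)⁻¹ * π (q * (s : G)) ∈ T := by
      intro q s
      show (((π q)⁻¹ * π (q * (s : G)) : ↥H) : G) ∈ Q
      have hval : (((π q)⁻¹ * π (q * (s : G)) : ↥H) : G) =
          ρ q * (s : G) * (ρ (q * (s : G)))⁻¹ := by
        push_cast
        show (q * (ρ q)⁻¹)⁻¹ * (q * (s : G) * (ρ (q * (s : G)))⁻¹) = _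
        group
      rw [hval]
      exact Set.mul_mem_mul (Set.mul_mem_mul (hρK₁ q) s.2) (Set.inv_mem_inv.2 (hρK₁ _))
    obtain ⟨m, hm'⟩ := CPAux.exists_word_bound hScomp hgen (hQcomp.inter_right hclosed)
    have hm : ∀ t : ↥T, ∃ w : List (↥S × Bool),
        FreeGroup.lift (fun s : S => (s : G)) (FreeGroup.mk w) = ((t : ↥H) : G) ∧
          w.length ≤ m := by
      intro t
      exact hm' _ ⟨t.2, (t : ↥H).2⟩
    exact ⟨T, hTcomp, CPAux.boundedlyPresentedBy_subgroup H π hπH hbpG T hT m hm⟩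
  · rintro ⟨T, hTcomp, hbpH⟩
    have hbpH' := hbpH
    obtain ⟨n0, R0, -, hsurj0, -⟩ := hbpH'
    have hgenT : Subgroup.closure T = (⊤ : Subgroup ↥H) := by
      have hr : (FreeGroup.lift (fun t : T => (t : ↥H))).range = ⊤ :=
        MonoidHom.range_eq_top.2 hsurj0
      rw [FreeGroup.range_lift_eq_closure, Subtype.range_coe] at hr
      exact hr
    set S : Set G := (fun h : ↥H => (h : G)) '' T ∪ K₁ with hSdef
    have hScomp : IsCompact S := (hTcomp.image continuous_subtype_val).union hK₁comp
    have hST : ∀ t : ↥T, ((t : ↥H) : G) ∈ S := fun t => Or.inl ⟨(t : ↥H), t.2, rfl⟩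
    have hρS : ∀ g, ρ g ∈ S := fun g => Or.inr (hρK₁ g)
    set Q' : Set G := K₁ * (S ∪ S⁻¹) * K₁⁻¹ with hQ'def
    have hQ'comp : IsCompact Q' := (hK₁comp.mul (hScomp.union hScomp.inv)).mul hK₁comp.inv
    set D : Set ↥H := {h : ↥H | (h : G) ∈ Q'} with hDdef
    have hDcomp : IsCompact D := by
      rw [Subtype.isCompact_iff]
      have himg : (Subtype.val '' D : Set G) = Q' ∩ (H : Set G) := by
        ext x
        constructor
        · rintro ⟨⟨y, hy⟩, hmem, rfl⟩
          exact ⟨hmem, hy⟩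
        · rintro ⟨hxQ, hxH⟩
          exact ⟨⟨x, hxH⟩, hxQ, rfl⟩
      rw [himg]
      exact hQ'comp.inter_right hclosed
    obtain ⟨m, hm'⟩ := CPAux.exists_word_bound (G := ↥H) hTcomp hgenT hDcomp
    have hm : ∀ (q : G) (s : ↥S) (b : Bool),
        ∃ w : List (↥T × Bool),
          FreeGroup.lift (fun t : T => (t : ↥H)) (FreeGroup.mk w) =
            (π q)⁻¹ * π (q * cond b (s : G) (s : G)⁻¹) ∧ w.length ≤ m := by
      intro q s b
      apply hm'
      show ((((π q)⁻¹ * π (q * cond b (s : G) (s : G)⁻¹)) : ↥H) : G) ∈ Q'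
      have hval : ((((π q)⁻¹ * π (q * cond b (s : G) (s : G)⁻¹)) : ↥H) : G) =
          ρ q * (cond b (s : G) (s : G)⁻¹) * (ρ (q * cond b (s : G) (s : G)⁻¹))⁻¹ := by
        push_cast
        show (q * (ρ q)⁻¹)⁻¹ * (q * cond b (s : G) (s : G)⁻¹ *
          (ρ (q * cond b (s : G) (s : G)⁻¹))⁻¹) = _
        group
      rw [hval]
      refine Set.mul_mem_mul (Set.mul_mem_mul (hρK₁ q) ?_) (Set.inv_mem_inv.2 (hρK₁ _))
      cases b
      · exact Or.inr (Set.inv_mem_inv.2 s.2)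
      · exact Or.inl s.2
    exact ⟨S, hScomp, CPAux.boundedlyPresentedBy_of_subgroup H π ρ hπρ hbpH S hST hρS m hm⟩
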